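/- arXiv:2208.04893 — 2 statements merged into one kernel-verified Lean document; each statement's English description precedes it below -/
import Mathlib

section
/- Let M be a loopless and coloopless matroid. A subset A is a stressed subset with non-empty cusp if and only if A is a cyclic flat that covers the bottom element ∅ and is covered by the top element E in the lattice of cyclic flats of M. -/
open Set

variable {α : Type*}

/-- The (natural-number valued) rank of a set `X` in a matroid `M`:
the maximum cardinality of an independent subset of `X`. -/
noncomputable def Matroid.nrk (M : Matroid α) (X : Set α) : ℕ :=
  sSup (Set.ncard '' {I | M.Indep I ∧ I ⊆ X})

/-- The rank of the matroid `M`. -/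
noncomputable def Matroid.nRank (M : Matroid α) : ℕ := M.nrk M.E

/-- The cusp of a subset `A` in a matroid `M` of rank `k`:
all `k`-element subsets `S` of the ground set with `|S ∩ A| ≥ rk A + 1`. -/
def Matroid.cusp (M : Matroid α) (A : Set α) : Set (Set α) :=
  {S | S ⊆ M.E ∧ S.ncard = M.nRank ∧ M.nrk A + 1 ≤ (S ∩ A).ncard}

/-- A subset `A` of a matroid `M` is stressed if both the restriction `M | A`
and the contraction `M / A` are uniform matroids; for a finite matroid this is
equivalent to the rank functions of the restriction and of the contraction being
those of uniform matroids. -/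
def Matroid.StressedSubset (M : Matroid α) (A : Set α) : Prop :=
  (∀ S ⊆ A, M.nrk S = min S.ncard (M.nrk A)) ∧
  (∀ Y ⊆ M.E \ A, M.nrk (A ∪ Y) = M.nrk A + min Y.ncard (M.nRank - M.nrk A))

/-- A circuit of `M`: a minimal dependent set. -/
def Matroid.Circ (M : Matroid α) (C : Set α) : Prop := Minimal M.Dep C

/-- A cyclic set of `M`: a (possibly empty) union of circuits. -/
def Matroid.Cyclic (M : Matroid α) (A : Set α) : Prop :=
  ∀ e ∈ A, ∃ C ⊆ A, M.Circ C ∧ e ∈ C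

/-- A cyclic flat of `M`: a flat that is a union of circuits. -/
def Matroid.CyclicFlat (M : Matroid α) (A : Set α) : Prop :=
  M.IsFlat A ∧ M.Cyclic A

namespace Matroid

variable {M : Matroid α} {X Y I J A Z C S F : Set α} {e a f : α}

lemma nrk_bddAbove (hfin : M.E.Finite) (hX : X ⊆ M.E) :
    BddAbove (Set.ncard '' {I | M.Indep I ∧ I ⊆ X}) := by
  refine ⟨X.ncard, ?_⟩
  rintro n ⟨J, ⟨hJ, hJX⟩, rfl⟩
  exact Set.ncard_le_ncard hJX (hfin.subset hX)

lemma indep_ncard_le_nrk (hfin : M.E.Finite) (hI : M.Indep I) (hIX : I ⊆ X)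
    (hX : X ⊆ M.E) : I.ncard ≤ M.nrk X :=
  le_csSup (nrk_bddAbove hfin hX) ⟨I, ⟨hI, hIX⟩, rfl⟩

lemma IsBasis.nrk_eq (hfin : M.E.Finite) (hI : M.IsBasis I X) : M.nrk X = I.ncard := by
  have hX := hI.subset_ground
  refine le_antisymm (csSup_le ⟨0, ∅, ⟨M.empty_indep, empty_subset X⟩, Set.ncard_empty _⟩ ?_)
    (indep_ncard_le_nrk hfin hI.indep hI.subset hX)
  rintro n ⟨J, ⟨hJ, hJX⟩, rfl⟩
  by_contra hlt
  push_neg at hlt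
  have hIfin : I.Finite := hfin.subset (hI.subset.trans hX)
  have hJfin : J.Finite := hfin.subset (hJX.trans hX)
  have hlt' : I.encard < J.encard := by
    rw [← hIfin.cast_ncard_eq, ← hJfin.cast_ncard_eq]
    exact_mod_cast hlt
  obtain ⟨e, heJI, hins⟩ := hI.indep.augment hJ hlt'
  have h := hI.eq_of_subset_indep hins (subset_insert _ _)
    (insert_subset (hJX heJI.1) hI.subset)
  exact heJI.2 (h ▸ mem_insert e I)

lemma nrk_le_ncard (hfin : M.E.Finite) (hX : X ⊆ M.E) : M.nrk X ≤ X.ncard := by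
  obtain ⟨I, hI⟩ := M.exists_isBasis X hX
  rw [hI.nrk_eq hfin]
  exact ncard_le_ncard hI.subset (hfin.subset hX)

lemma nrk_mono (hfin : M.E.Finite) (hXY : X ⊆ Y) (hY : Y ⊆ M.E) : M.nrk X ≤ M.nrk Y := by
  obtain ⟨I, hI⟩ := M.exists_isBasis X (hXY.trans hY)
  rw [hI.nrk_eq hfin]
  exact indep_ncard_le_nrk hfin hI.indep (hI.subset.trans hXY) hY

lemma Indep.nrk_eq_ncard (hfin : M.E.Finite) (hI : M.Indep I) : M.nrk I = I.ncard :=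
  hI.isBasis_self.nrk_eq hfin

lemma nrk_eq_ncard_iff_indep (hfin : M.E.Finite) (hX : X ⊆ M.E) :
    M.nrk X = X.ncard ↔ M.Indep X := by
  refine ⟨fun h ↦ ?_, fun h ↦ h.nrk_eq_ncard hfin⟩
  obtain ⟨I, hI⟩ := M.exists_isBasis X hX
  have hIX : I = X := eq_of_subset_of_ncard_le hI.subset
    (by rw [← h, hI.nrk_eq hfin]) (hfin.subset hX)
  exact hIX ▸ hI.indep

lemma Dep.nrk_lt_ncard (hfin : M.E.Finite) (hX : M.Dep X) : M.nrk X < X.ncard :=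
  lt_of_le_of_ne (nrk_le_ncard hfin hX.subset_ground)
    (fun h ↦ hX.not_indep ((nrk_eq_ncard_iff_indep hfin hX.subset_ground).1 h))

lemma nrk_closure_eq (hfin : M.E.Finite) (hX : X ⊆ M.E) :
    M.nrk (M.closure X) = M.nrk X := by
  obtain ⟨I, hI⟩ := M.exists_isBasis X hX
  rw [hI.isBasis_closure_right.nrk_eq hfin, hI.nrk_eq hfin]

lemma nrk_insert_le (hfin : M.E.Finite) (hX : X ⊆ M.E) (he : e ∈ M.E) :
    M.nrk (insert e X) ≤ M.nrk X + 1 := by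
  by_cases heX : e ∈ X
  · rw [insert_eq_of_mem heX]; exact Nat.le_succ _
  obtain ⟨I, hI⟩ := M.exists_isBasis X hX
  obtain ⟨J, hJ, hIJ⟩ := hI.indep.subset_isBasis_of_subset
    (hI.subset.trans (subset_insert e X)) (insert_subset he hX)
  rw [hJ.nrk_eq hfin, hI.nrk_eq hfin]
  have hJX : J \ {e} ⊆ X := by
    rintro f ⟨hfJ, hfe⟩
    rcases mem_insert_iff.1 (hJ.subset hfJ) with rfl | h
    · exact absurd rfl hfe
    · exact h
  have hIeq : I = J \ {e} := hI.eq_of_subset_indep (hJ.indep.diff _)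
    (subset_diff_singleton hIJ (fun h ↦ heX (hI.subset h))) hJX
  have hJfin : J.Finite := hfin.subset hJ.indep.subset_ground
  calc J.ncard ≤ (J \ {e}).ncard + 1 := by
        rcases em (e ∈ J) with h | h
        · rw [ncard_diff_singleton_add_one h hJfin]
        · rw [diff_singleton_eq_self h]; exact Nat.le_succ _
  _ = I.ncard + 1 := by rw [hIeq]

lemma mem_closure_iff_nrk (hfin : M.E.Finite) (hX : X ⊆ M.E) (he : e ∈ M.E) :
    e ∈ M.closure X ↔ M.nrk (insert e X) = M.nrk X := by
  constructor
  · intro h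
    rw [← nrk_closure_eq hfin (insert_subset he hX), closure_insert_eq_of_mem_closure h,
      nrk_closure_eq hfin hX]
  · intro h
    by_contra hecl
    obtain ⟨I, hI⟩ := M.exists_isBasis X hX
    have heI : e ∉ I := fun h' ↦ hecl (M.subset_closure X hX (hI.subset h'))
    have hecl' : e ∉ M.closure I := by rw [hI.closure_eq_closure]; exact hecl
    have hins : M.Indep (insert e I) := by
      rw [hI.indep.insert_indep_iff_of_notMem heI]
      exact ⟨he, hecl'⟩
    have hle : (insert e I).ncard ≤ M.nrk (insert e X) :=
      indep_ncard_le_nrk hfin hins (insert_subset_insert hI.subset) (insert_subset he hX)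
    rw [h, hI.nrk_eq hfin,
      ncard_insert_of_notMem heI (hfin.subset hI.indep.subset_ground)] at hle
    omega

lemma nrk_union_le (hfin : M.E.Finite) (hX : X ⊆ M.E) (hY : Y ⊆ M.E) :
    M.nrk (X ∪ Y) ≤ M.nrk X + Y.ncard := by
  obtain ⟨J, hJ⟩ := M.exists_isBasis (X ∪ Y) (union_subset hX hY)
  rw [hJ.nrk_eq hfin]
  have h1 : (J \ Y).ncard ≤ M.nrk X :=
    indep_ncard_le_nrk hfin (hJ.indep.diff _)
      (fun f hf ↦ Or.elim (hJ.subset hf.1) id (fun h ↦ absurd h hf.2)) hX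
  have hJfin : J.Finite := hfin.subset hJ.indep.subset_ground
  calc J.ncard = (J \ Y).ncard + (J ∩ Y).ncard := by
        rw [← ncard_union_eq (disjoint_sdiff_left.mono_right inter_subset_right)
          (hJfin.diff (t := Y)) (hJfin.inter_of_left _), diff_union_inter]
  _ ≤ M.nrk X + Y.ncard := add_le_add h1 (ncard_le_ncard inter_subset_right (hfin.subset hY))

lemma IsFlat.eq_ground_of_nrk_eq (hfin : M.E.Finite) (hF : M.IsFlat F)
    (h : M.nRank ≤ M.nrk F) : F = M.E := by
  obtain ⟨I, hI⟩ := M.exists_isBasis F hF.subset_ground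
  obtain ⟨J, hJ, hIJ⟩ := hI.indep.subset_isBasis_of_subset
    (hI.subset.trans hF.subset_ground) Subset.rfl
  have hIJ' : I = J := eq_of_subset_of_ncard_le hIJ
    (by rw [← hI.nrk_eq hfin, ← hJ.nrk_eq hfin]; exact h)
    (hfin.subset hJ.indep.subset_ground)
  calc F = M.closure F := hF.closure.symm
  _ = M.closure I := hI.closure_eq_closure.symm
  _ = M.closure J := by rw [hIJ']
  _ = M.E := by rw [hJ.closure_eq_closure, closure_ground]

lemma flat_closure (M : Matroid α) (X : Set α) : M.IsFlat (M.closure X) := by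
  rw [isFlat_iff_isClosed]
  refine ⟨M.closure_subset_ground X, ?_⟩
  have h : (⟨M.closure X, M.closure_subset_ground X⟩ : Iic M.E)
      = M.subtypeClosure ⟨X ∩ M.E, inter_subset_right⟩ :=
    Subtype.ext (M.closure_eq_subtypeClosure X)
  rw [h]
  exact M.subtypeClosure.isClosed_closure _

lemma Circ.dep (h : M.Circ C) : M.Dep C := h.1

lemma Circ.diff_singleton_indep (h : M.Circ C) (he : e ∈ C) : M.Indep (C \ {e}) := by
  by_contra hdep
  have hd : M.Dep (C \ {e}) := dep_of_not_indep hdep (diff_subset.trans h.1.subset_ground)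
  have h2 := h.2 hd diff_subset
  exact (h2 he).2 rfl

lemma Circ.mem_closure_diff_singleton (h : M.Circ C) (he : e ∈ C) :
    e ∈ M.closure (C \ {e}) := by
  have hI := h.diff_singleton_indep he
  have hdep : M.Dep (insert e (C \ {e})) := by
    rw [insert_diff_singleton, insert_eq_of_mem he]; exact h.1
  exact (hI.insert_dep_iff.1 hdep).1

lemma exists_circ_aux (hfin : M.E.Finite) :
    ∀ n (X : Set α), X.ncard = n → M.Dep X → ∃ C, C ⊆ X ∧ M.Circ C := by
  intro n
  induction n using Nat.strong_induction_on with
  | _ n IH =>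
    intro X hcard hX
    by_cases h : Minimal M.Dep X
    · exact ⟨X, Subset.rfl, h⟩
    · simp only [Minimal, not_and, not_forall] at h
      obtain ⟨Y, hY, hYX, hXY⟩ := h hX
      have hss : Y ⊂ X := lt_iff_le_not_ge.2 ⟨hYX, hXY⟩
      have hYlt : Y.ncard < n := hcard ▸ ncard_lt_ncard hss (hfin.subset hX.subset_ground)
      obtain ⟨C, hCY, hC⟩ := IH _ hYlt Y rfl hY
      exact ⟨C, hCY.trans hYX, hC⟩

lemma Dep.exists_circ (hfin : M.E.Finite) (hX : M.Dep X) : ∃ C, C ⊆ X ∧ M.Circ C :=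
  exists_circ_aux hfin _ _ rfl hX

lemma exists_circ_of_mem_closure (hfin : M.E.Finite) (hX : X ⊆ M.E)
    (he : e ∈ M.closure X) (heX : e ∉ X) :
    ∃ C, C ⊆ insert e X ∧ M.Circ C ∧ e ∈ C := by
  obtain ⟨I, hI⟩ := M.exists_isBasis X hX
  have heI : e ∉ I := fun h ↦ heX (hI.subset h)
  have hecl : e ∈ M.closure I := by rw [hI.closure_eq_closure]; exact he
  have hdep : M.Dep (insert e I) := hI.indep.insert_dep_iff.2 ⟨hecl, heI⟩
  obtain ⟨C, hCI, hC⟩ := hdep.exists_circ hfin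
  refine ⟨C, hCI.trans (insert_subset_insert hI.subset), hC, ?_⟩
  by_contra heC
  have hCsub : C ⊆ I := fun g hg ↦ (mem_insert_iff.1 (hCI hg)).resolve_left
    (fun h ↦ heC (h ▸ hg))
  exact hC.dep.not_indep (hI.indep.subset hCsub)

lemma Circ.cyclic (h : M.Circ C) : M.Cyclic C := fun e he ↦ ⟨C, Subset.rfl, h, he⟩

lemma Cyclic.union (hX : M.Cyclic X) (hY : M.Cyclic Y) : M.Cyclic (X ∪ Y) := by
  rintro e (he | he)
  · obtain ⟨C, hC, h1, h2⟩ := hX e he; exact ⟨C, hC.trans subset_union_left, h1, h2⟩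
  · obtain ⟨C, hC, h1, h2⟩ := hY e he; exact ⟨C, hC.trans subset_union_right, h1, h2⟩

lemma Cyclic.closure (hfin : M.E.Finite) (hX : X ⊆ M.E) (h : M.Cyclic X) :
    M.Cyclic (M.closure X) := by
  intro g hg
  by_cases hgX : g ∈ X
  · obtain ⟨C, hC, h1, h2⟩ := h g hgX
    exact ⟨C, hC.trans (M.subset_closure X hX), h1, h2⟩
  · obtain ⟨C, hC, h1, h2⟩ := exists_circ_of_mem_closure hfin hX hg hgX
    exact ⟨C, hC.trans (insert_subset hg (M.subset_closure X hX)), h1, h2⟩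

lemma cusp_ne_empty_iff (hfin : M.E.Finite) (hA : A ⊆ M.E) :
    M.cusp A ≠ ∅ ↔ M.nrk A < A.ncard ∧ M.nrk A < M.nRank := by
  rw [← nonempty_iff_ne_empty]
  constructor
  · rintro ⟨S, hSE, hScard, hSA⟩
    have h1 : (S ∩ A).ncard ≤ A.ncard := ncard_le_ncard inter_subset_right (hfin.subset hA)
    have h2 : (S ∩ A).ncard ≤ S.ncard := ncard_le_ncard inter_subset_left (hfin.subset hSE)
    omega
  · rintro ⟨h1, h2⟩
    obtain ⟨T, hTA, hTcard⟩ := Set.exists_subset_card_eq (show M.nrk A + 1 ≤ A.ncard from h1)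
    have hcompl : M.nRank ≤ M.nrk A + (M.E \ A).ncard := by
      have h := nrk_union_le (M := M) (Y := M.E \ A) hfin hA diff_subset
      rwa [union_diff_cancel hA] at h
    obtain ⟨U, hUE, hUcard⟩ := Set.exists_subset_card_eq
      (show M.nRank - (M.nrk A + 1) ≤ (M.E \ A).ncard from by omega)
    have hdisj : Disjoint T U := Set.disjoint_left.2 fun x hxT hxU ↦ (hUE hxU).2 (hTA hxT)
    refine ⟨T ∪ U, union_subset (hTA.trans hA) (hUE.trans diff_subset), ?_, ?_⟩
    · rw [ncard_union_eq hdisj (hfin.subset (hTA.trans hA))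
        (hfin.subset (hUE.trans diff_subset)), hTcard, hUcard]
      omega
    · have hsub : T ⊆ (T ∪ U) ∩ A := subset_inter subset_union_left hTA
      calc M.nrk A + 1 = T.ncard := hTcard.symm
      _ ≤ ((T ∪ U) ∩ A).ncard := ncard_le_ncard hsub (hfin.subset (inter_subset_right.trans hA))

end Matroid

/-- for a loopless and coloopless matroid `M`, a subset `A` is a
stressed subset with non-empty cusp if and only if `A` is a cyclic flat that covers the
bottom element `∅` and is covered by the top element `E` in the lattice of cyclic flats
of `M`. -/
theorem stressed_nonempty_cusp_iff_cyclic_flat_cover (M : Matroid α) (hfin : M.E.Finite)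
    (hloopless : ∀ e ∈ M.E, M.Indep {e}) (hcoloopless : ∀ e ∈ M.E, M✶.Indep {e})
    {A : Set α} (hA : A ⊆ M.E) :
    (M.StressedSubset A ∧ M.cusp A ≠ ∅) ↔
      (M.CyclicFlat A ∧ A ≠ ∅ ∧ A ≠ M.E ∧
        (∀ Z, M.CyclicFlat Z → Z ⊆ A → Z = ∅ ∨ Z = A) ∧
        (∀ Z, M.CyclicFlat Z → A ⊆ Z → Z = A ∨ Z = M.E)) := by
  have hAfin : A.Finite := hfin.subset hA
  constructor
  · rintro ⟨⟨hres, hcon⟩, hcusp⟩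
    obtain ⟨hdep, hrk⟩ := (Matroid.cusp_ne_empty_iff hfin hA).1 hcusp
    have hflat : M.IsFlat A := by
      have hclA : M.closure A ⊆ A := by
        intro e he
        by_contra heA
        have heE : e ∈ M.E := M.mem_ground_of_mem_closure he
        have h1 : M.nrk (insert e A) = M.nrk A :=
          (Matroid.mem_closure_iff_nrk hfin hA heE).1 he
        have h2 := hcon {e} (singleton_subset_iff.2 ⟨heE, heA⟩)
        rw [union_singleton, ncard_singleton] at h2
        omega
      have heq : A = M.closure A := (M.subset_closure A hA).antisymm hclA
      rw [heq]
      exact M.flat_closure A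
    have hcyc : M.Cyclic A := by
      intro e he
      obtain ⟨B', hB'A, hB'card⟩ := Set.exists_subset_card_eq
        (show M.nrk A ≤ (A \ {e}).ncard from by
          have h := ncard_diff_singleton_add_one he hAfin
          omega)
      have heB' : e ∉ B' := fun h ↦ (hB'A h).2 rfl
      have hBA : insert e B' ⊆ A := insert_subset he (hB'A.trans diff_subset)
      have hBcard : (insert e B').ncard = M.nrk A + 1 := by
        rw [ncard_insert_of_notMem heB' (hAfin.subset (hB'A.trans diff_subset)), hB'card]
      have hBdep : M.Dep (insert e B') := by
        refine M.dep_of_not_indep (fun hi ↦ ?_) (hBA.trans hA)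
        have h1 := hres (insert e B') hBA
        rw [hi.nrk_eq_ncard hfin, hBcard] at h1
        omega
      refine ⟨insert e B', hBA, ⟨hBdep, fun S hS hSB ↦ ?_⟩, mem_insert e B'⟩
      have hSA : S ⊆ A := hSB.trans hBA
      have h1 := hres S hSA
      have h2 : M.nrk S < S.ncard := hS.nrk_lt_ncard hfin
      have h3 : S.ncard ≤ (insert e B').ncard := ncard_le_ncard hSB (hAfin.subset hBA)
      have hSeq : S = insert e B' :=
        eq_of_subset_of_ncard_le hSB (by omega) (hAfin.subset hBA)
      exact hSeq.symm.subset
    refine ⟨⟨hflat, hcyc⟩, ?_, ?_, ?_, ?_⟩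
    · rintro rfl; simp at hdep
    · intro h; rw [h] at hrk; exact lt_irrefl _ hrk
    · rintro Z ⟨hZf, hZc⟩ hZA
      rcases eq_empty_or_nonempty Z with rfl | ⟨e, heZ⟩
      · exact Or.inl rfl
      right
      obtain ⟨C, hCZ, hC, heC⟩ := hZc e heZ
      have hZdep : M.Dep Z := hC.dep.superset hCZ (hZA.trans hA)
      have h1 := hres Z hZA
      have h2 := hZdep.nrk_lt_ncard hfin
      refine hZA.antisymm (fun a haA ↦ ?_)
      have haE := hA haA
      have h3 := hres (insert a Z) (insert_subset haA hZA)
      have h4 : Z.ncard ≤ (insert a Z).ncard :=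
        ncard_le_ncard (subset_insert _ _) (hAfin.subset (insert_subset haA hZA))
      have h5 : a ∈ M.closure Z := by
        rw [Matroid.mem_closure_iff_nrk hfin (hZA.trans hA) haE]
        omega
      rwa [hZf.closure] at h5
    · rintro Z ⟨hZf, hZc⟩ hAZ
      by_cases hZE : Z = M.E
      · exact Or.inr hZE
      left
      have hZE' : Z ⊆ M.E := hZf.subset_ground
      have hZfin : Z.Finite := hfin.subset hZE'
      have hrZ : M.nrk Z < M.nRank :=
        lt_of_le_of_ne (Matroid.nrk_mono hfin hZE' Subset.rfl)
          (fun h ↦ hZE (hZf.eq_ground_of_nrk_eq hfin h.ge))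
      have hYE : Z \ A ⊆ M.E \ A := diff_subset_diff_left hZE'
      have hZ' : Z = A ∪ (Z \ A) := (union_diff_cancel hAZ).symm
      have h2 := hcon (Z \ A) hYE
      rw [← hZ'] at h2
      have hrA : M.nrk A ≤ M.nRank := Matroid.nrk_mono hfin hA Subset.rfl
      have hYlt : (Z \ A).ncard < M.nRank - M.nrk A := by omega
      rcases eq_empty_or_nonempty (Z \ A) with h0 | ⟨e, heY⟩
      · rw [hZ', h0, union_empty]
      exfalso
      obtain ⟨C, hCZ, hC, heC⟩ := hZc e heY.1
      have heY' : e ∈ C ∩ (Z \ A) := ⟨heC, heY⟩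
      have hY'Y : C ∩ (Z \ A) ⊆ Z \ A := inter_subset_right
      have hY'fin : (C ∩ (Z \ A)).Finite := hZfin.subset (hY'Y.trans diff_subset)
      have hr1 := hcon (C ∩ (Z \ A)) (hY'Y.trans hYE)
      have hr2 := hcon ((C ∩ (Z \ A)) \ {e}) ((diff_subset.trans hY'Y).trans hYE)
      have hcard' : (C ∩ (Z \ A)).ncard ≤ (Z \ A).ncard :=
        ncard_le_ncard hY'Y (hZfin.subset diff_subset)
      have hcard'' : ((C ∩ (Z \ A)) \ {e}).ncard + 1 = (C ∩ (Z \ A)).ncard :=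
        ncard_diff_singleton_add_one heY' hY'fin
      have hsub : C \ {e} ⊆ A ∪ ((C ∩ (Z \ A)) \ {e}) := by
        rintro f ⟨hfC, hfe⟩
        by_cases hfA : f ∈ A
        · exact Or.inl hfA
        · exact Or.inr ⟨⟨hfC, hCZ hfC, hfA⟩, hfe⟩
      have hecl : e ∈ M.closure (A ∪ ((C ∩ (Z \ A)) \ {e})) :=
        M.closure_subset_closure hsub (hC.mem_closure_diff_singleton heC)
      have heE : e ∈ M.E := hZE' heY.1
      have hAY'E : A ∪ ((C ∩ (Z \ A)) \ {e}) ⊆ M.E :=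
        union_subset hA (((diff_subset.trans hY'Y).trans hYE).trans diff_subset)
      have hstep : M.nrk (insert e (A ∪ ((C ∩ (Z \ A)) \ {e})))
          = M.nrk (A ∪ ((C ∩ (Z \ A)) \ {e})) :=
        (Matroid.mem_closure_iff_nrk hfin hAY'E heE).1 hecl
      have hins : insert e (A ∪ ((C ∩ (Z \ A)) \ {e})) = A ∪ (C ∩ (Z \ A)) := by
        rw [← union_insert, insert_diff_singleton, insert_eq_of_mem heY']
      rw [hins, hr1, hr2] at hstep
      omega
  · rintro ⟨⟨hflat, hcyc⟩, hne, hneE, hmin, hmax⟩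
    have hkA : M.nrk A < M.nRank :=
      lt_of_le_of_ne (Matroid.nrk_mono hfin hA Subset.rfl)
        (fun h ↦ hneE (hflat.eq_ground_of_nrk_eq hfin h.ge))
    have hdepA : M.Dep A := by
      obtain ⟨e, heA⟩ := nonempty_iff_ne_empty.2 hne
      obtain ⟨C, hCA, hC, heC⟩ := hcyc e heA
      exact hC.dep.superset hCA hA
    have hcardA : M.nrk A < A.ncard := hdepA.nrk_lt_ncard hfin
    have hres : ∀ S ⊆ A, M.nrk S = min S.ncard (M.nrk A) := by
      intro S hSA
      have hSE : S ⊆ M.E := hSA.trans hA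
      rcases M.indep_or_dep hSE with hS | hS
      · have hle : M.nrk S ≤ M.nrk A := Matroid.nrk_mono hfin hSA hA
        rw [hS.nrk_eq_ncard hfin] at hle ⊢
        omega
      · obtain ⟨C, hCS, hC⟩ := hS.exists_circ hfin
        have hCA : C ⊆ A := hCS.trans hSA
        have hZcf : M.CyclicFlat (M.closure C) :=
          ⟨M.flat_closure C, hC.cyclic.closure hfin (hCA.trans hA)⟩
        have hZA : M.closure C ⊆ A := by
          have h := M.closure_subset_closure hCA
          rwa [hflat.closure] at h
        have hZne : M.closure C ≠ ∅ := by
          obtain ⟨x, hx⟩ := hC.dep.nonempty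
          intro h
          have hx' := M.subset_closure C (hCA.trans hA) hx
          rw [h] at hx'
          exact hx'
        rcases hmin _ hZcf hZA with h | h
        · exact absurd h hZne
        have h1 : M.nrk (M.closure C) = M.nrk C :=
          Matroid.nrk_closure_eq hfin (hCA.trans hA)
        rw [h] at h1
        have h2 : M.nrk C ≤ M.nrk S := Matroid.nrk_mono hfin hCS hSE
        have hle : M.nrk S ≤ M.nrk A := Matroid.nrk_mono hfin hSA hA
        have h3 : M.nrk S ≤ S.ncard := Matroid.nrk_le_ncard hfin hSE
        omega
    refine ⟨⟨hres, ?_⟩, (Matroid.cusp_ne_empty_iff hfin hA).2 ⟨hcardA, hkA⟩⟩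
    have key : ∀ n (Y : Set α), Y ⊆ M.E \ A → Y.ncard = n →
        M.nrk (A ∪ Y) < M.nRank → M.nrk (A ∪ Y) = M.nrk A + n := by
      intro n
      induction n with
      | zero =>
        intro Y hYE hYcard _
        have h0 : Y = ∅ := (ncard_eq_zero (hfin.subset (hYE.trans diff_subset))).1 hYcard
        rw [h0, union_empty]
        omega
      | succ n IH =>
        intro Y hYE hYcard hYrk
        have hYfin : Y.Finite := hfin.subset (hYE.trans diff_subset)
        obtain ⟨e, heY⟩ := nonempty_of_ncard_ne_zero (by omega : Y.ncard ≠ 0)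
        have hY₀card : (Y \ {e}).ncard = n := by
          have h := ncard_diff_singleton_add_one heY hYfin; omega
        have hY₀E : Y \ {e} ⊆ M.E \ A := diff_subset.trans hYE
        have hsub : A ∪ (Y \ {e}) ⊆ A ∪ Y := union_subset_union_right _ diff_subset
        have hAYE : A ∪ Y ⊆ M.E := union_subset hA (hYE.trans diff_subset)
        have hAY₀E : A ∪ (Y \ {e}) ⊆ M.E := hsub.trans hAYE
        have hle : M.nrk (A ∪ (Y \ {e})) ≤ M.nrk (A ∪ Y) :=
          Matroid.nrk_mono hfin hsub hAYE
        have hIH := IH (Y \ {e}) hY₀E hY₀card (lt_of_le_of_lt hle hYrk)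
        have hins : A ∪ Y = insert e (A ∪ (Y \ {e})) := by
          rw [← union_insert, insert_diff_singleton, insert_eq_of_mem heY]
        have heE : e ∈ M.E := (hYE heY).1
        have hup : M.nrk (A ∪ Y) ≤ M.nrk (A ∪ (Y \ {e})) + 1 := by
          rw [hins]; exact Matroid.nrk_insert_le hfin hAY₀E heE
        by_cases hcase : M.nrk (A ∪ Y) = M.nrk (A ∪ (Y \ {e}))
        · exfalso
          have hecl : e ∈ M.closure (A ∪ (Y \ {e})) := by
            rw [Matroid.mem_closure_iff_nrk hfin hAY₀E heE, ← hins]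
            exact hcase
          have heAY₀ : e ∉ A ∪ (Y \ {e}) := by
            rintro (h | h)
            · exact (hYE heY).2 h
            · exact h.2 rfl
          obtain ⟨C, hCsub, hC, heC⟩ :=
            Matroid.exists_circ_of_mem_closure hfin hAY₀E hecl heAY₀
          have hCAY : C ⊆ A ∪ Y := by rw [hins]; exact hCsub
          have hACE : A ∪ C ⊆ M.E := union_subset hA hC.dep.subset_ground
          have hZcf : M.CyclicFlat (M.closure (A ∪ C)) :=
            ⟨M.flat_closure _, (hcyc.union hC.cyclic).closure hfin hACE⟩
          have hAZ : A ⊆ M.closure (A ∪ C) :=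
            subset_union_left.trans (M.subset_closure _ hACE)
          rcases hmax _ hZcf hAZ with h | h
          · have hmem : e ∈ M.closure (A ∪ C) := M.subset_closure _ hACE (Or.inr heC)
            rw [h] at hmem
            exact heAY₀ (Or.inl hmem)
          · have hZrk : M.nrk (M.closure (A ∪ C)) = M.nrk (A ∪ C) :=
              Matroid.nrk_closure_eq hfin hACE
            have hle2 : M.nrk (A ∪ C) ≤ M.nrk (A ∪ Y) :=
              Matroid.nrk_mono hfin (union_subset subset_union_left hCAY) hAYE
            rw [h] at hZrk
            have hkdef : M.nRank = M.nrk M.E := rfl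
            omega
        · omega
    intro Y hYE
    have hAYE : A ∪ Y ⊆ M.E := union_subset hA (hYE.trans diff_subset)
    have hle : M.nrk (A ∪ Y) ≤ M.nRank := Matroid.nrk_mono hfin hAYE Subset.rfl
    rcases lt_or_eq_of_le hle with hlt | heq
    · have h := key Y.ncard Y hYE rfl hlt
      omega
    · have hub : M.nrk (A ∪ Y) ≤ M.nrk A + Y.ncard :=
        Matroid.nrk_union_le hfin hA (hYE.trans diff_subset)
      have hrAk : M.nrk A ≤ M.nRank := Matroid.nrk_mono hfin hA Subset.rfl
      omega
end

section
/- Let M be a matroid of rank k on E and F a stressed subset with rk(F) = r and |F| = h. Then the Tutte polynomial of the relaxation satisfies T_{Rel(M,F)}(x,y) − T_M(x,y) = ∑_{i=r+1}^{h} ∑_{j=0}^{k−r−1} (h choose i)·((n−h) choose j)·α(i,j), where α(i,j) = (x−1)^{k−i−j}(1 − ((x−1)(y−1))^{i−r}) if i+j ≤ k and α(i,j) = (y−1)^{i+j−k}(1 − ((x−1)(y−1))^{k−r−j}) if i+j > k. -/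
open Set

variable {α : Type*}

namespace Matroid

variable [Fintype α] {M : Matroid α} {I X Y B : Set α}

private lemma ncard_le_natcard (s : Set α) : s.ncard ≤ Nat.card α := by
  simpa [Set.ncard_univ] using Set.ncard_le_ncard (Set.subset_univ s) (Set.toFinite _)

private lemma bddAbove_aux (M : Matroid α) (X : Set α) :
    BddAbove (Set.ncard '' {I | M.Indep I ∧ I ⊆ X}) :=
  ⟨Nat.card α, by rintro m ⟨J, -, rfl⟩; exact ncard_le_natcard J⟩

lemma Indep.ncard_le_nrk (hI : M.Indep I) (hIX : I ⊆ X) : I.ncard ≤ M.nrk X :=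
  le_csSup (bddAbove_aux M X) ⟨I, ⟨hI, hIX⟩, rfl⟩

lemma IsBasis'.nrk_eq (h : M.IsBasis' I X) : M.nrk X = I.ncard := by
  refine le_antisymm (csSup_le ⟨I.ncard, ⟨I, ⟨h.indep, h.subset⟩, rfl⟩⟩ ?_)
    (h.indep.ncard_le_nrk h.subset)
  rintro m ⟨J, ⟨hJi, hJX⟩, rfl⟩
  obtain ⟨I', hI', hJI'⟩ := hJi.subset_isBasis'_of_subset hJX
  have h1 : J.ncard ≤ I'.ncard := Set.ncard_le_ncard hJI' (Set.toFinite _)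
  have h2 : I'.ncard = I.ncard := by
    rw [Set.ncard_def, Set.ncard_def, hI'.encard_eq_encard h]
  omega

lemma nrk_mono_s19 (M : Matroid α) (hXY : X ⊆ Y) : M.nrk X ≤ M.nrk Y := by
  obtain ⟨I, hI⟩ := M.exists_isBasis' X
  rw [hI.nrk_eq]
  exact hI.indep.ncard_le_nrk (hI.subset.trans hXY)

lemma nrk_le_ncard_s19 (M : Matroid α) (X : Set α) : M.nrk X ≤ X.ncard := by
  obtain ⟨I, hI⟩ := M.exists_isBasis' X
  rw [hI.nrk_eq]
  exact Set.ncard_le_ncard hI.subset (Set.toFinite _)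

lemma IsBase.ncard_eq (hB : M.IsBase B) : B.ncard = M.nRank :=
  (hB.isBasis_ground.isBasis'.nrk_eq).symm

lemma IsBase.inter_ncard_le_nrk (hB : M.IsBase B) (A : Set α) : (A ∩ B).ncard ≤ M.nrk A :=
  ((hB.indep.subset Set.inter_subset_right).ncard_le_nrk Set.inter_subset_left)

lemma exists_base_nrk_eq_inter (M : Matroid α) (hE : M.E = Set.univ) (A : Set α) :
    ∃ B, M.IsBase B ∧ M.nrk A = (A ∩ B).ncard := by
  obtain ⟨I, hI⟩ := M.exists_isBasis A (by rw [hE]; exact Set.subset_univ A)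
  obtain ⟨B, hBb, hIB⟩ := hI.exists_isBase
  exact ⟨B, hBb, by rw [hI.isBasis'.nrk_eq, hIB, Set.inter_comm]⟩

lemma nrk_submod (M : Matroid α) (hE : M.E = Set.univ) (X Y : Set α) :
    M.nrk (X ∪ Y) + M.nrk (X ∩ Y) ≤ M.nrk X + M.nrk Y := by
  obtain ⟨J, hJ⟩ := M.exists_isBasis (X ∩ Y) (by rw [hE]; exact Set.subset_univ _)
  obtain ⟨I, hI, hJI⟩ := hJ.indep.subset_isBasis_of_subset
    (hJ.subset.trans (Set.inter_subset_left.trans Set.subset_union_left))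
    (by rw [hE]; exact Set.subset_univ _)
  have h1 : M.nrk (X ∪ Y) = I.ncard := hI.isBasis'.nrk_eq
  have h2 : M.nrk (X ∩ Y) = J.ncard := hJ.isBasis'.nrk_eq
  have h3 : (I ∩ X).ncard ≤ M.nrk X :=
    (hI.indep.subset Set.inter_subset_left).ncard_le_nrk Set.inter_subset_right
  have h4 : (I ∩ Y).ncard ≤ M.nrk Y :=
    (hI.indep.subset Set.inter_subset_left).ncard_le_nrk Set.inter_subset_right
  have h5 : (I ∩ X ∪ I ∩ Y).ncard + (I ∩ X ∩ (I ∩ Y)).ncard = (I ∩ X).ncard + (I ∩ Y).ncard :=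
    Set.ncard_union_add_ncard_inter _ _ (Set.toFinite _) (Set.toFinite _)
  have h6 : I ∩ X ∪ I ∩ Y = I := by
    rw [← Set.inter_union_distrib_left]
    exact Set.inter_eq_self_of_subset_left hI.subset
  have h7 : J ⊆ I ∩ X ∩ (I ∩ Y) :=
    fun x hx => ⟨⟨hJI hx, (hJ.subset hx).1⟩, hJI hx, (hJ.subset hx).2⟩
  have h8 : J.ncard ≤ (I ∩ X ∩ (I ∩ Y)).ncard := Set.ncard_le_ncard h7 (Set.toFinite _)
  rw [h6] at h5
  omega

end Matroid

/-- The summand function for the Tutte polynomial difference. -/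
def relxg (r k : ℕ) (x y : ℤ) (i j : ℕ) : ℤ :=
  if r + 1 ≤ i ∧ j < k - r then
    (if i + j ≤ k then
      (x - 1) ^ (k - i - j) * (1 - ((x - 1) * (y - 1)) ^ (i - r))
     else
      (y - 1) ^ (i + j - k) * (1 - ((x - 1) * (y - 1)) ^ (k - r - j)))
  else 0

private lemma sum_powerset_eq [Fintype α] (s : Finset α) (f : ℕ → ℤ) :
    ∑ t ∈ s.powerset, f t.card
      = ∑ i ∈ Finset.range (s.card + 1), (s.card.choose i : ℤ) * f i := by
  rw [Finset.sum_powerset_apply_card]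
  simp only [nsmul_eq_mul]

/-- the change of the Tutte polynomial
`T_N(x,y) = ∑_{A ⊆ E} (x−1)^{rk N − rk_N A}·(y−1)^{|A| − rk_N A}` under the relaxation of a
stressed subset `F` of rank `r` and size `h` in a rank-`k` matroid `M` on `n` elements:
`T_{Rel(M,F)}(x,y) − T_M(x,y) = ∑_{i=r+1}^{h} ∑_{j=0}^{k−r−1} (h choose i)·(n−h choose j)·α(i,j)`
with `α(i,j) = (x−1)^{k−i−j}(1 − ((x−1)(y−1))^{i−r})` if `i+j ≤ k` and
`α(i,j) = (y−1)^{i+j−k}(1 − ((x−1)(y−1))^{k−r−j})` if `i+j > k`. -/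
theorem tutte_relaxation [Fintype α] (M M' : Matroid α) (hE : M.E = Set.univ)
    {n k r h : ℕ} (hn : Fintype.card α = n) (hk : M.nRank = k) {F : Set α}
    (hF : F ⊆ M.E) (hstr : M.StressedSubset F) (hr : M.nrk F = r) (hh : F.ncard = h)
    (hE' : M'.E = M.E) (hB : ∀ B, M'.IsBase B ↔ M.IsBase B ∨ B ∈ M.cusp F)
    (x y : ℤ) :
    (∑ A : Finset α,
        (x - 1) ^ (M'.nRank - M'.nrk (A : Set α)) * (y - 1) ^ (A.card - M'.nrk (A : Set α))) -
      (∑ A : Finset α,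
        (x - 1) ^ (M.nRank - M.nrk (A : Set α)) * (y - 1) ^ (A.card - M.nrk (A : Set α))) =
    ∑ i ∈ Finset.Icc (r + 1) h, ∑ j ∈ Finset.range (k - r),
      (h.choose i : ℤ) * ((n - h).choose j : ℤ) *
        (if i + j ≤ k then
          (x - 1) ^ (k - i - j) * (1 - ((x - 1) * (y - 1)) ^ (i - r))
         else
          (y - 1) ^ (i + j - k) * (1 - ((x - 1) * (y - 1)) ^ (k - r - j))) := by
  classical
  have hE'u : M'.E = Set.univ := by rw [hE', hE]
  -- basic numerical facts
  have hrk : r ≤ k := by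
    rw [← hr, ← hk]
    exact M.nrk_mono_s19 hF
  have hrh : r ≤ h := by rw [← hr, ← hh]; exact M.nrk_le_ncard_s19 F
  have hn' : (Set.univ : Set α).ncard = n := by
    rw [Set.ncard_univ, Nat.card_eq_fintype_card, hn]
  have hkn : k ≤ n := by
    rw [← hk, ← hn']
    show M.nrk M.E ≤ (Set.univ : Set α).ncard
    rw [hE]
    exact M.nrk_le_ncard_s19 _
  have hcompl : (Set.univ \ F).ncard = n - h := by
    rw [Set.ncard_diff (Set.subset_univ F) (Set.toFinite _), hn', hh]
  have hknh : k - r ≤ n - h := by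
    obtain ⟨J, hJ⟩ := M.exists_isBasis F hF
    obtain ⟨B, hBb, hJB⟩ := hJ.indep.exists_isBase_superset
    have hBk : B.ncard = k := by rw [hBb.ncard_eq, hk]
    have hBF : (B ∩ F).ncard ≤ r := by
      rw [← hr]
      exact (hBb.indep.subset Set.inter_subset_left).ncard_le_nrk Set.inter_subset_right
    have hsplit : (B ∩ F).ncard + (B \ F).ncard = B.ncard :=
      Set.ncard_inter_add_ncard_diff_eq_ncard B F (Set.toFinite _)
    have hBdiff : (B \ F).ncard ≤ (Set.univ \ F).ncard :=
      Set.ncard_le_ncard (Set.diff_subset_diff_left (Set.subset_univ B)) (Set.toFinite _)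
    omega
  -- rank formulas for M
  have hMF : ∀ S ⊆ F, M.nrk S = min S.ncard r := by
    intro S hS; rw [hstr.1 S hS, hr]
  have hMun : ∀ A : Set α, M.nrk (A ∪ F) = r + min ((A \ F).ncard) (k - r) := by
    intro A
    have h1 : A ∪ F = F ∪ (A \ F) := by rw [Set.union_diff_self, Set.union_comm]
    have h2 : A \ F ⊆ M.E \ F := by
      rw [hE]; exact Set.diff_subset_diff_left (Set.subset_univ A)
    rw [h1, hstr.2 _ h2, hr, hk]
  have hMrk : ∀ A : Set α, r + 1 ≤ (A ∩ F).ncard →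
      M.nrk A = min (r + (A \ F).ncard) k := by
    intro A hiA
    have hub : M.nrk A ≤ r + min ((A \ F).ncard) (k - r) := by
      rw [← hMun A]; exact M.nrk_mono_s19 Set.subset_union_left
    have hsub := M.nrk_submod hE A F
    have hAF : M.nrk (A ∩ F) = r := by
      rw [hMF _ Set.inter_subset_right, min_eq_right (by omega)]
    rw [hMun A, hAF, hr] at hsub
    omega
  have hMlow : ∀ A : Set α, (A ∩ F).ncard ≤ r →
      (A ∩ F).ncard + min ((A \ F).ncard) (k - r) ≤ M.nrk A := by
    intro A hiA
    have hsub := M.nrk_submod hE A F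
    rw [hMun A, hr, hMF _ Set.inter_subset_right, min_eq_left hiA] at hsub
    omega
  -- facts about M'
  have hM'base : ∀ B : Set α, M.IsBase B → M'.IsBase B := fun B hb => (hB B).mpr (Or.inl hb)
  have hk' : M'.nRank = k := by
    obtain ⟨B, hb⟩ := M.exists_isBase
    rw [← (hM'base B hb).ncard_eq, hb.ncard_eq, hk]
  have hG3 : ∀ A : Set α, M.nrk A ≤ M'.nrk A := by
    intro A
    obtain ⟨B, hb, hEq⟩ := M.exists_base_nrk_eq_inter hE A
    rw [hEq]; exact (hM'base B hb).inter_ncard_le_nrk A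
  have hG2 : ∀ A : Set α, (A ∩ F).ncard ≤ r → M'.nrk A = M.nrk A := by
    intro A hiA
    refine le_antisymm ?_ (hG3 A)
    obtain ⟨B, hb, hEq⟩ := M'.exists_base_nrk_eq_inter hE'u A
    rw [hEq]
    rcases (hB B).mp hb with hbM | hcusp
    · exact hbM.inter_ncard_le_nrk A
    · obtain ⟨hBE, hBcard, hBcusp⟩ := hcusp
      rw [hr] at hBcusp
      have hlow := hMlow A hiA
      have p1 : ((A ∩ B) ∩ F).ncard + ((A ∩ B) \ F).ncard = (A ∩ B).ncard :=
        Set.ncard_inter_add_ncard_diff_eq_ncard _ _ (Set.toFinite _)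
      have p2 : ((A ∩ B) ∩ F).ncard ≤ (A ∩ F).ncard :=
        Set.ncard_le_ncard (fun x hx => ⟨hx.1.1, hx.2⟩) (Set.toFinite _)
      have p3 : ((A ∩ B) \ F).ncard ≤ (A \ F).ncard :=
        Set.ncard_le_ncard (fun x hx => ⟨hx.1.1, hx.2⟩) (Set.toFinite _)
      have p4 : ((A ∩ B) \ F).ncard ≤ (B \ F).ncard :=
        Set.ncard_le_ncard (fun x hx => ⟨hx.1.2, hx.2⟩) (Set.toFinite _)
      have p5 : (B ∩ F).ncard + (B \ F).ncard = B.ncard :=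
        Set.ncard_inter_add_ncard_diff_eq_ncard _ _ (Set.toFinite _)
      have hBk : B.ncard = k := by rw [hBcard, hk]
      omega
  have hG4 : ∀ A : Set α, r + 1 ≤ (A ∩ F).ncard → r + 1 ≤ k →
      M'.nrk A = min A.ncard k := by
    intro A hiA hk1
    have hub2 : M'.nrk A ≤ k := by
      rw [← hk']
      exact M'.nrk_mono_s19 (by rw [hE'u]; exact Set.subset_univ A)
    refine le_antisymm (le_min (M'.nrk_le_ncard_s19 A) hub2) ?_
    obtain ⟨S, hScusp, hAScard⟩ :
        ∃ S : Set α, S ∈ M.cusp F ∧ (A ∩ S).ncard = min A.ncard k := by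
      rcases le_or_gt A.ncard k with hAk | hAk
      · obtain ⟨S, hAS, _, hScard⟩ :=
          Set.exists_subsuperset_card_eq (Set.subset_univ A) hAk (by rw [hn']; exact hkn)
        refine ⟨S, ⟨by rw [hE]; exact Set.subset_univ S, by rw [hScard, hk], ?_⟩, ?_⟩
        · rw [hr]
          exact le_trans hiA
            (Set.ncard_le_ncard (Set.inter_subset_inter_left F hAS) (Set.toFinite _))
        · rw [Set.inter_eq_self_of_subset_left hAS, min_eq_left hAk]
      · rcases le_or_gt k ((A ∩ F).ncard) with hik | hik
        · obtain ⟨S, hSsub, hScard⟩ := Set.exists_subset_card_eq (s := A ∩ F) hik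
          have hSA : S ⊆ A := hSsub.trans Set.inter_subset_left
          have hSF : S ⊆ F := hSsub.trans Set.inter_subset_right
          refine ⟨S, ⟨by rw [hE]; exact Set.subset_univ S, by rw [hScard, hk], ?_⟩, ?_⟩
          · rw [hr, Set.inter_eq_self_of_subset_left hSF, hScard]; omega
          · rw [Set.inter_eq_self_of_subset_right hSA, hScard,
              min_eq_right (le_of_lt hAk)]
        · have hijcard : (A ∩ F).ncard + (A \ F).ncard = A.ncard :=
            Set.ncard_inter_add_ncard_diff_eq_ncard _ _ (Set.toFinite _)
          obtain ⟨T, hTsub, hTcard⟩ :=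
            Set.exists_subset_card_eq (s := A \ F) (n := k - (A ∩ F).ncard) (by omega)
          have hdisj : Disjoint (A ∩ F) T :=
            Set.disjoint_left.mpr fun z hz hzT => (hTsub hzT).2 hz.2
          have hScard : ((A ∩ F) ∪ T).ncard = k := by
            rw [Set.ncard_union_eq hdisj (Set.toFinite _) (Set.toFinite _), hTcard]; omega
          have hsubA : (A ∩ F) ∪ T ⊆ A :=
            Set.union_subset Set.inter_subset_left (hTsub.trans Set.diff_subset)
          refine ⟨(A ∩ F) ∪ T,
            ⟨by rw [hE]; exact Set.subset_univ _, by rw [hScard, hk], ?_⟩, ?_⟩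
          · rw [hr]
            refine le_trans hiA (Set.ncard_le_ncard ?_ (Set.toFinite _))
            intro z hz; exact ⟨Or.inl hz, hz.2⟩
          · rw [Set.inter_eq_self_of_subset_right hsubA, hScard,
              min_eq_right (le_of_lt hAk)]
    have hSb : M'.IsBase S := (hB S).mpr (Or.inr hScusp)
    have hfin : (A ∩ S).ncard ≤ M'.nrk A :=
      (hSb.indep.subset Set.inter_subset_right).ncard_le_nrk Set.inter_subset_left
    rw [← hAScard]; exact hfin
  -- case k = r
  rcases eq_or_lt_of_le hrk with hkr | hrk1
  · have hzero : k - r = 0 := by omega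
    have hnrkeq : ∀ X : Set α, M'.nrk X = M.nrk X := by
      intro X
      refine le_antisymm ?_ (hG3 X)
      obtain ⟨B, hb, hEq⟩ := M'.exists_base_nrk_eq_inter hE'u X
      rcases (hB B).mp hb with hbM | hcusp
      · rw [hEq]; exact hbM.inter_ncard_le_nrk X
      · exfalso
        obtain ⟨hBE, hBcard, hBcusp⟩ := hcusp
        rw [hr] at hBcusp
        have : (B ∩ F).ncard ≤ B.ncard :=
          Set.ncard_le_ncard Set.inter_subset_left (Set.toFinite _)
        rw [hBcard, hk] at this
        omega
    rw [hzero]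
    simp only [Finset.range_zero, Finset.sum_empty, Finset.sum_const_zero]
    rw [sub_eq_zero]
    refine Finset.sum_congr rfl fun A _ => ?_
    rw [hnrkeq, hk, hk']
  -- main case : r < k
  have hci : ∀ A : Finset α, ((A : Set α) ∩ F).ncard = (A ∩ F.toFinset).card := by
    intro A
    rw [← Set.ncard_coe_finset (A ∩ F.toFinset), Finset.coe_inter, Set.coe_toFinset]
  have hcj : ∀ A : Finset α, ((A : Set α) \ F).ncard = (A \ F.toFinset).card := by
    intro A
    rw [← Set.ncard_coe_finset (A \ F.toFinset), Finset.coe_sdiff, Set.coe_toFinset]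
  have key : ∀ A : Finset α,
      (x - 1) ^ (M'.nRank - M'.nrk (A : Set α)) * (y - 1) ^ (A.card - M'.nrk (A : Set α)) -
        (x - 1) ^ (M.nRank - M.nrk (A : Set α)) * (y - 1) ^ (A.card - M.nrk (A : Set α))
      = relxg r k x y ((A ∩ F.toFinset).card) ((A \ F.toFinset).card) := by
    intro A
    rw [← hci, ← hcj]
    have hijA : ((A : Set α) ∩ F).ncard + ((A : Set α) \ F).ncard = A.card := by
      rw [← Set.ncard_coe_finset A]
      exact Set.ncard_inter_add_ncard_diff_eq_ncard _ _ (Set.toFinite _)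
    set i := ((A : Set α) ∩ F).ncard with hidef
    set j := ((A : Set α) \ F).ncard with hjdef
    rw [hk, hk']
    by_cases hiF : r + 1 ≤ i
    · have hM1 : M.nrk (A : Set α) = min (r + j) k := hMrk _ hiF
      have hM2 : M'.nrk (A : Set α) = min (i + j) k := by
        rw [hG4 _ hiF (by omega), Set.ncard_coe_finset, ← hijA]
      rw [hM1, hM2, ← hijA]
      by_cases hjF : j < k - r
      · simp only [relxg]
        rw [if_pos ⟨hiF, hjF⟩]
        by_cases hijk : i + j ≤ k
        · rw [if_pos hijk, min_eq_left hijk, min_eq_left (by omega : r + j ≤ k)]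
          rw [(by omega : i + j - (i + j) = 0),
            (by omega : k - (i + j) = k - i - j),
            (by omega : k - (r + j) = (k - i - j) + (i - r)),
            (by omega : i + j - (r + j) = i - r)]
          rw [pow_zero, pow_add, mul_pow]
          ring
        · rw [if_neg hijk, min_eq_right (by omega : k ≤ i + j),
            min_eq_left (by omega : r + j ≤ k)]
          rw [(by omega : k - k = 0),
            (by omega : k - (r + j) = k - r - j),
            (by omega : i + j - (r + j) = (i + j - k) + (k - r - j))]
          rw [pow_zero, pow_add, mul_pow]
          ring
      · simp only [relxg]
        rw [if_neg (fun hc => hjF hc.2)]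
        rw [min_eq_right (by omega : k ≤ r + j), min_eq_right (by omega : k ≤ i + j),
          sub_self]
    · rw [hG2 _ (by omega), sub_self]
      simp only [relxg]
      rw [if_neg (fun hc => hiF hc.1)]
  -- the summation
  have hFfcard : F.toFinset.card = h := by rw [← Set.ncard_eq_toFinset_card', hh]
  have hFfccard : F.toFinsetᶜ.card = n - h := by
    rw [Finset.card_compl, hFfcard, hn]
  rw [← Finset.sum_sub_distrib]
  rw [Finset.sum_congr rfl fun A _ => key A]
  have hbij : ∑ A : Finset α, relxg r k x y ((A ∩ F.toFinset).card) ((A \ F.toFinset).card)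
      = ∑ p ∈ F.toFinset.powerset ×ˢ F.toFinsetᶜ.powerset,
          relxg r k x y p.1.card p.2.card := by
    refine Finset.sum_nbij' (fun A => (A ∩ F.toFinset, A \ F.toFinset))
      (fun p => p.1 ∪ p.2) ?_ ?_ ?_ ?_ ?_
    · intro A _
      rw [Finset.mem_product]
      constructor
      · exact Finset.mem_powerset.mpr Finset.inter_subset_right
      · refine Finset.mem_powerset.mpr fun z hz => Finset.mem_compl.mpr ?_
        exact (Finset.mem_sdiff.mp hz).2
    · intro p _; exact Finset.mem_univ _
    · intro A _
      ext z
      simp only [Finset.mem_union, Finset.mem_inter, Finset.mem_sdiff]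
      tauto
    · intro p hp
      rw [Finset.mem_product] at hp
      have h1 : p.1 ⊆ F.toFinset := Finset.mem_powerset.mp hp.1
      have h2 : p.2 ⊆ F.toFinsetᶜ := Finset.mem_powerset.mp hp.2
      have h2' : ∀ z ∈ p.2, z ∉ F.toFinset := fun z hz => Finset.mem_compl.mp (h2 hz)
      have e1 : (p.1 ∪ p.2) ∩ F.toFinset = p.1 := by
        ext z
        simp only [Finset.mem_inter, Finset.mem_union]
        constructor
        · rintro ⟨hz1 | hz2, hzF⟩
          · exact hz1
          · exact absurd hzF (h2' z hz2)
        · intro hz; exact ⟨Or.inl hz, h1 hz⟩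
      have e2 : (p.1 ∪ p.2) \ F.toFinset = p.2 := by
        ext z
        simp only [Finset.mem_sdiff, Finset.mem_union]
        constructor
        · rintro ⟨hz1 | hz2, hzF⟩
          · exact absurd (h1 hz1) hzF
          · exact hz2
        · intro hz; exact ⟨Or.inr hz, h2' z hz⟩
      rw [e1, e2]
    · intro A _; rfl
  rw [hbij, Finset.sum_product]
  have hinner : ∀ P : Finset α,
      ∑ Q ∈ F.toFinsetᶜ.powerset, relxg r k x y P.card Q.card
        = ∑ j ∈ Finset.range (n - h + 1), ((n - h).choose j : ℤ) * relxg r k x y P.card j := by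
    intro P
    rw [sum_powerset_eq F.toFinsetᶜ (relxg r k x y P.card), hFfccard]
  rw [Finset.sum_congr rfl fun P _ => hinner P]
  rw [sum_powerset_eq F.toFinset
    (fun i => ∑ j ∈ Finset.range (n - h + 1), ((n - h).choose j : ℤ) * relxg r k x y i j),
    hFfcard]
  -- now goal : ∑ i ∈ range (h+1), (h.choose i) * ∑ j ..., = RHS
  have houtsub : Finset.Icc (r + 1) h ⊆ Finset.range (h + 1) := by
    intro i hi
    rw [Finset.mem_Icc] at hi
    rw [Finset.mem_range]
    omega
  have houtvan : ∀ i ∈ Finset.range (h + 1), i ∉ Finset.Icc (r + 1) h →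
      (h.choose i : ℤ) *
        ∑ j ∈ Finset.range (n - h + 1), ((n - h).choose j : ℤ) * relxg r k x y i j = 0 := by
    intro i hi hni
    rw [Finset.mem_range] at hi
    rw [Finset.mem_Icc] at hni
    push_neg at hni
    have hir : ¬ (r + 1 ≤ i) := fun hc => by
      have := hni hc
      omega
    have hz : ∑ j ∈ Finset.range (n - h + 1), ((n - h).choose j : ℤ) * relxg r k x y i j = 0 :=
      Finset.sum_eq_zero fun j _ => by
        simp only [relxg]
        rw [if_neg (fun hc => hir hc.1), mul_zero]
    rw [hz, mul_zero]
  rw [← Finset.sum_subset houtsub houtvan]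
  refine Finset.sum_congr rfl fun i hi => ?_
  rw [Finset.mem_Icc] at hi
  have hinsub : Finset.range (k - r) ⊆ Finset.range (n - h + 1) :=
    Finset.range_subset_range.mpr (by omega)
  have hinvan : ∀ j ∈ Finset.range (n - h + 1), j ∉ Finset.range (k - r) →
      ((n - h).choose j : ℤ) * relxg r k x y i j = 0 := by
    intro j _ hj
    rw [Finset.mem_range] at hj
    push_neg at hj
    have hz : relxg r k x y i j = 0 := by
      simp only [relxg]
      rw [if_neg (fun hc => by omega)]
    rw [hz, mul_zero]
  rw [← Finset.sum_subset hinsub hinvan, Finset.mul_sum]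
  refine Finset.sum_congr rfl fun j hj => ?_
  rw [Finset.mem_range] at hj
  simp only [relxg]
  rw [if_pos ⟨hi.1, hj⟩, ← mul_assoc]
end
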